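/- (Approximation ratio ε of Algorithm 4.) Let ε > 0, let σ = (a₁, …, a_m) be a stream of elements of a type with decidable equality, and run the Misra–Gries algorithm with capacity k-1 on σ for any integer k with k ≥ 1/ε and k ≥ 2. Then for every element j, the returned estimate satisfies f_j - ε·m ≤ f̂_j ≤ f_j, where f_j is the true number of occurrences of j in σ. -/

import Mathlib

/-- One step of the Misra–Gries algorithm with capacity `k - 1`.  The state is
a finitely supported map `f : α →₀ ℕ` from elements to (positive) counters;
elements with counter `0` are exactly those not present in the map.  On reading
`a`: if `a` has a counter, increment it; else if fewer than `k - 1` elements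
are currently stored, insert `a` with counter `1`; otherwise decrement every
counter by `1` (counters reaching `0` drop out of the support). -/
noncomputable def mgStep {α : Type*} [DecidableEq α] (k : ℕ) (f : α →₀ ℕ) (a : α) :
    α →₀ ℕ :=
  if 0 < f a then f.update a (f a + 1)
  else if f.support.card < k - 1 then f.update a 1
  else f.mapRange (· - 1) (Nat.zero_sub 1)

/-- Running the Misra–Gries algorithm with capacity `k - 1` on the stream `σ`,
starting from the empty map; `mgRun k σ j` is the final estimated count `f̂ⱼ`
of element `j` (`0` if `j` is absent from the final map). -/
noncomputable def mgRun {α : Type*} [DecidableEq α] (k : ℕ) (σ : List α) : α →₀ ℕ :=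
  σ.foldl (mgStep k) 0

lemma mgStep_spec {α : Type*} [DecidableEq α] (k : ℕ) (hk : 2 ≤ k) (f : α →₀ ℕ) (a : α)
    (hcard : f.support.card ≤ k - 1) :
    ∃ δ : ℕ,
      (∀ j, mgStep k f a j ≤ f j + (if j = a then 1 else 0)) ∧
      (∀ j, f j + (if j = a then 1 else 0) ≤ mgStep k f a j + δ) ∧
      (mgStep k f a).sum (fun _ n => n) + δ * k = f.sum (fun _ n => n) + 1 ∧
      (mgStep k f a).support.card ≤ k - 1 := by
  unfold mgStep
  split_ifs with h1 h2
  · -- increment branch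
    have hupd : f.update a (f a + 1) = f + Finsupp.single a 1 := by
      ext j
      rcases eq_or_ne j a with hj | hj
      · simp [hj, Finsupp.coe_update, Function.update, Finsupp.single_apply]
      · simp [hj, Ne.symm hj, Finsupp.coe_update, Function.update, Finsupp.single_apply]
    refine ⟨0, ?_, ?_, ?_, ?_⟩
    · intro j
      rw [hupd]
      rcases eq_or_ne j a with hj | hj
      · simp [hj, Finsupp.single_apply]
      · simp [hj, Ne.symm hj, Finsupp.single_apply]
    · intro j
      rw [hupd]
      rcases eq_or_ne j a with hj | hj
      · simp [hj, Finsupp.single_apply]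
      · simp [hj, Ne.symm hj, Finsupp.single_apply]
    · rw [hupd, Finsupp.sum_add_index' (fun _ => rfl) (fun _ _ _ => rfl),
        Finsupp.sum_single_index rfl]
      simp
    · rw [hupd]
      have h := Finsupp.support_add (g₁ := f) (g₂ := Finsupp.single a 1)
      have ha : a ∈ f.support := by simpa [Finsupp.mem_support_iff] using h1.ne'
      calc (f + Finsupp.single a 1).support.card
          ≤ (f.support ∪ (Finsupp.single a 1).support).card := Finset.card_le_card h
        _ ≤ (f.support ∪ {a}).card := by
            apply Finset.card_le_card; apply Finset.union_subset_union_right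
            exact Finsupp.support_single_subset
        _ = f.support.card := by rw [Finset.union_comm, Finset.union_eq_right.2 (by simpa using ha)]
        _ ≤ k - 1 := hcard
  · -- insert branch
    have h0 : f a = 0 := Nat.eq_zero_of_not_pos h1
    have hupd : f.update a 1 = f + Finsupp.single a 1 := by
      ext j
      rcases eq_or_ne j a with hj | hj
      · simp [hj, h0, Finsupp.coe_update, Function.update, Finsupp.single_apply]
      · simp [hj, Ne.symm hj, h0, Finsupp.coe_update, Function.update, Finsupp.single_apply]
    refine ⟨0, ?_, ?_, ?_, ?_⟩
    · intro j
      rw [hupd]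
      rcases eq_or_ne j a with hj | hj
      · simp [hj, Finsupp.single_apply]
      · simp [hj, Ne.symm hj, Finsupp.single_apply]
    · intro j
      rw [hupd]
      rcases eq_or_ne j a with hj | hj
      · simp [hj, Finsupp.single_apply]
      · simp [hj, Ne.symm hj, Finsupp.single_apply]
    · rw [hupd, Finsupp.sum_add_index' (fun _ => rfl) (fun _ _ _ => rfl),
        Finsupp.sum_single_index rfl]
      simp
    · rw [hupd]
      have h := Finsupp.support_add (g₁ := f) (g₂ := Finsupp.single a 1)
      calc (f + Finsupp.single a 1).support.card
          ≤ (f.support ∪ (Finsupp.single a 1).support).card := Finset.card_le_card h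
        _ ≤ (f.support ∪ {a}).card := by
            apply Finset.card_le_card; apply Finset.union_subset_union_right
            exact Finsupp.support_single_subset
        _ ≤ f.support.card + 1 := by
            simpa using Finset.card_union_le f.support {a}
        _ ≤ k - 1 := by omega
  · -- decrement branch
    have h0 : f a = 0 := Nat.eq_zero_of_not_pos h1
    have hc : f.support.card = k - 1 := le_antisymm hcard (Nat.le_of_not_lt h2)
    set g := f.mapRange (· - 1) (Nat.zero_sub 1) with hg
    have hgj : ∀ j, g j = f j - 1 := fun j => Finsupp.mapRange_apply
    have hsupp : g.support ⊆ f.support := Finsupp.support_mapRange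
    have hsum : g.sum (fun _ n => n) = ∑ x ∈ f.support, (f x - 1) := by
      rw [Finsupp.sum_of_support_subset g hsupp _ (fun _ _ => rfl)]
      exact Finset.sum_congr rfl (fun x _ => hgj x)
    have hkey : g.sum (fun _ n => n) + f.support.card = f.sum (fun _ n => n) := by
      rw [hsum, Finsupp.sum, Finset.card_eq_sum_ones, ← Finset.sum_add_distrib]
      refine Finset.sum_congr rfl (fun x hx => ?_)
      have : 1 ≤ f x := Nat.one_le_iff_ne_zero.2 (Finsupp.mem_support_iff.1 hx)
      omega
    refine ⟨1, ?_, ?_, ?_, ?_⟩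
    · intro j
      rw [hgj]
      by_cases hj : j = a <;> simp [hj] <;> omega
    · intro j
      rw [hgj]
      by_cases hj : j = a <;> simp [hj, h0] <;> omega
    · omega
    · exact le_trans (Finset.card_le_card hsupp) hcard

lemma mg_fold {α : Type*} [DecidableEq α] (k : ℕ) (hk : 2 ≤ k) :
    ∀ (σ : List α) (f : α →₀ ℕ), f.support.card ≤ k - 1 →
    ∃ d : ℕ,
      (∀ j, (σ.foldl (mgStep k) f) j ≤ f j + σ.count j) ∧
      (∀ j, f j + σ.count j ≤ (σ.foldl (mgStep k) f) j + d) ∧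
      (σ.foldl (mgStep k) f).sum (fun _ n => n) + d * k ≤ f.sum (fun _ n => n) + σ.length ∧
      (σ.foldl (mgStep k) f).support.card ≤ k - 1 := by
  intro σ
  induction σ with
  | nil => intro f hf; exact ⟨0, fun j => by simp, fun j => by simp, by simp, hf⟩
  | cons a σ ih =>
    intro f hf
    obtain ⟨δ, hub, hlb, hsum, hcard⟩ := mgStep_spec k hk f a hf
    obtain ⟨d, ihub, ihlb, ihsum, ihcard⟩ := ih (mgStep k f a) hcard
    refine ⟨d + δ, ?_, ?_, ?_, ihcard⟩
    · intro j
      have h1 := ihub j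
      have h2 := hub j
      have hcnt : (a :: σ).count j = σ.count j + if j = a then 1 else 0 := by
        by_cases hj : j = a <;> simp [hj, List.count_cons] <;> exact Ne.symm hj
      simp only [List.foldl_cons]
      omega
    · intro j
      have h1 := ihlb j
      have h2 := hlb j
      have hcnt : (a :: σ).count j = σ.count j + if j = a then 1 else 0 := by
        by_cases hj : j = a <;> simp [hj, List.count_cons] <;> exact Ne.symm hj
      simp only [List.foldl_cons]
      omega
    · simp only [List.foldl_cons, List.length_cons]
      have : (d + δ) * k = d * k + δ * k := by ring
      omega


/-- Approximation ratio `ε`: if `k ≥ 1 / ε` and `k ≥ 2`, then for every element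
`j` the Misra–Gries estimate satisfies `fⱼ - ε * m ≤ f̂ⱼ ≤ fⱼ`, where `fⱼ` is
the true number of occurrences of `j` in the stream `σ` of length `m`. -/
theorem mgRun_eps_approx {α : Type*} [DecidableEq α] (ε : ℝ) (hε : 0 < ε)
    (k : ℕ) (hk : 2 ≤ k) (hkε : 1 / ε ≤ (k : ℝ)) (σ : List α) (j : α) :
    (σ.count j : ℝ) - ε * (σ.length : ℝ) ≤ (mgRun k σ j : ℝ) ∧
      (mgRun k σ j : ℝ) ≤ (σ.count j : ℝ) := by

  obtain ⟨d, hub, hlb, hsum, -⟩ := mg_fold k hk σ 0 (by simp)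
  have hub' : mgRun k σ j ≤ σ.count j := by simpa [mgRun] using hub j
  have hlb' : σ.count j ≤ mgRun k σ j + d := by simpa [mgRun] using hlb j
  have hdk : d * k ≤ σ.length := by
    have : (0 : α →₀ ℕ).sum (fun _ n => n) = 0 := by simp
    omega
  constructor
  · have h1 : (σ.count j : ℝ) ≤ (mgRun k σ j : ℝ) + d := by exact_mod_cast hlb'
    have h2 : (d : ℝ) * k ≤ σ.length := by exact_mod_cast hdk
    have h3 : 1 ≤ ε * k := by
      rw [div_le_iff₀ hε] at hkε; linarith
    have hd0 : (0 : ℝ) ≤ d := Nat.cast_nonneg d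
    nlinarith [hε.le]
  · exact_mod_cast hub'
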